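/- arXiv:2507.15529 — 2 statements merged into one kernel-verified Lean document; each statement's English description precedes it below -/
import Mathlib

section
/- Fix x ∈ Ω, α ∈ [0,1), and a total preorder R on Ω with 𝒢(Ω(x,R), α) nonempty. Suppose there exists C ⊆ S such that for all distributions G, H on S that agree pointwise and cumulatively on C, P_G[Ω(x,R)] = P_H[Ω(x,R)]. Then B_R^*(x) = inf{E[F] : F ∈ 𝒻_{C^+}(Ω(x,R), α)}. -/
noncomputable section

/-- Distributions on the finite support `S`, viewed as points of the probability
simplex inside `EuclideanSpace ℝ S` (Euclidean metric). -/
def distSet (S : Finset ℝ) : Set (EuclideanSpace ℝ ↥S) :=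
  {F | (∀ s, 0 ≤ F s) ∧ ∑ s, F s = 1}

/-- Mean of a distribution on `S`. -/
def distMean (S : Finset ℝ) (F : EuclideanSpace ℝ ↥S) : ℝ :=
  ∑ s : ↥S, F s * (s : ℝ)

open Classical in
/-- `P_F[A]`: probability of a set `A` of `n`-tuples under `n` i.i.d. draws from `F`. -/
def probOf (S : Finset ℝ) (n : ℕ) (F : EuclideanSpace ℝ ↥S)
    (A : Set (Fin n → ↥S)) : ℝ :=
  ∑ y : Fin n → ↥S, if y ∈ A then ∏ i, F (y i) else 0

/-- The interior likely set `𝒢(A, α)`. -/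
def intLikely (S : Finset ℝ) (n : ℕ) (A : Set (Fin n → ↥S)) (α : ℝ) :
    Set (EuclideanSpace ℝ ↥S) :=
  {F | F ∈ distSet S ∧ α < probOf S n F A}

/-- The likely set `𝒻(A, α)`: the closure of `𝒢(A, α)`. -/
def likely (S : Finset ℝ) (n : ℕ) (A : Set (Fin n → ↥S)) (α : ℝ) :
    Set (EuclideanSpace ℝ ↥S) :=
  closure (intLikely S n A α)

/-- `Ω`: the set of nondecreasing (`sorted`) `n`-tuples over `S`. -/
def sortedTuples (S : Finset ℝ) (n : ℕ) : Set (Fin n → ↥S) :=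
  {x | Monotone x}

/-- The sorted version of a tuple. -/
def sortTup (S : Finset ℝ) (n : ℕ) (y : Fin n → ↥S) : Fin n → ↥S :=
  y ∘ Tuple.sort y

/-- Probability of a set `A ⊆ Ω` of sorted tuples, identifying tuples with
their sorted versions. -/
def probSorted (S : Finset ℝ) (n : ℕ) (F : EuclideanSpace ℝ ↥S)
    (A : Set (Fin n → ↥S)) : ℝ :=
  probOf S n F {y | sortTup S n y ∈ A}

/-- Interior likely set for a set of sorted tuples. -/
def intLikelySorted (S : Finset ℝ) (n : ℕ) (A : Set (Fin n → ↥S)) (α : ℝ) :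
    Set (EuclideanSpace ℝ ↥S) :=
  {F | F ∈ distSet S ∧ α < probSorted S n F A}

/-- Likely set for a set of sorted tuples. -/
def likelySorted (S : Finset ℝ) (n : ℕ) (A : Set (Fin n → ↥S)) (α : ℝ) :
    Set (EuclideanSpace ℝ ↥S) :=
  closure (intLikelySorted S n A α)

/-- Upper set `Ω(x, R)` of `x` under a relation `R` on `Ω`. -/
def upperSet (S : Finset ℝ) (n : ℕ) (r : (Fin n → ↥S) → (Fin n → ↥S) → Prop)
    (x : Fin n → ↥S) : Set (Fin n → ↥S) :=
  {y ∈ sortedTuples S n | r x y}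

/-- Pessimal bound `B_R^*(x) = inf {E[F] : F ∈ 𝒻(Ω(x,R), α)}`. -/
def pessimal (S : Finset ℝ) (n : ℕ) (r : (Fin n → ↥S) → (Fin n → ↥S) → Prop)
    (α : ℝ) (x : Fin n → ↥S) : ℝ :=
  sInf (distMean S '' likelySorted S n (upperSet S n r x) α)

/-- `G` and `H` agree pointwise on `C`. -/
def ptAgree {S : Finset ℝ} (C : Set ↥S) (G H : EuclideanSpace ℝ ↥S) : Prop :=
  ∀ c ∈ C, G c = H c

open Classical in
/-- `G` and `H` agree cumulatively on `C`. -/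
def cumAgree (S : Finset ℝ) (C : Set ↥S) (G H : EuclideanSpace ℝ ↥S) : Prop :=
  ∀ c ∈ C, (∑ s : ↥S, if s ≤ c then G s else 0) = ∑ s : ↥S, if s ≤ c then H s else 0

/-- The refinement `𝒻_C`: distributions supported inside `C`. -/
def refinement (S : Finset ℝ) (C : Set ↥S) : Set (EuclideanSpace ℝ ↥S) :=
  {F ∈ distSet S | ∀ s, s ∉ C → F s = 0}

/-- `𝒢_C(A, α) = 𝒻_C ∩ 𝒢(A, α)` (for a set `A` of sorted tuples). -/
def intLikelySortedC (S : Finset ℝ) (n : ℕ) (C : Set ↥S)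
    (A : Set (Fin n → ↥S)) (α : ℝ) : Set (EuclideanSpace ℝ ↥S) :=
  refinement S C ∩ intLikelySorted S n A α

/-- `𝒻_C(A, α)`: the closure of `𝒢_C(A, α)`. -/
def likelySortedC (S : Finset ℝ) (n : ℕ) (C : Set ↥S)
    (A : Set (Fin n → ↥S)) (α : ℝ) : Set (EuclideanSpace ℝ ↥S) :=
  closure (intLikelySortedC S n C A α)

/-- The minimum of `S`, as an element of `↥S`. -/
def sMinElt (S : Finset ℝ) (hS : S.Nonempty) : ↥S :=
  ⟨S.min' hS, S.min'_mem hS⟩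

/-- The augmentation `C⁺ = C ∪ {S_min} ∪ {succ c : c ∈ C, c ≠ S_max}`, where
`succ c` is the smallest element of `S` greater than `c`. -/
def aug (S : Finset ℝ) (hS : S.Nonempty) (C : Set ↥S) : Set ↥S :=
  C ∪ {sMinElt S hS} ∪ {t | ∃ c ∈ C, c < t ∧ ∀ u : ↥S, c < u → t ≤ u}

/-! ### Auxiliary lemmas -/

/-- Existence of the "push-down" target: for each `s`, an element `t ∈ C⁺` with `t ≤ s`
which behaves like `s` with respect to comparisons and equalities with elements of `C`. -/
lemma exists_tgt (S : Finset ℝ) (hS : S.Nonempty) (C : Set ↥S) (s : ↥S) :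
    ∃ t : ↥S, t ∈ aug S hS C ∧ t ≤ s ∧
      (∀ c ∈ C, (t ≤ c ↔ s ≤ c)) ∧ (∀ c ∈ C, (t = c ↔ s = c)) := by
  classical
  by_cases hsa : s ∈ aug S hS C
  · exact ⟨s, hsa, le_rfl, fun _ _ => Iff.rfl, fun _ _ => Iff.rfl⟩
  · have hsC : s ∉ C := fun h => hsa (Or.inl (Or.inl h))
    by_cases hD : ∃ c ∈ C, c < s
    · set D : Finset ↥S := Finset.univ.filter (fun c => c ∈ C ∧ c < s) with hDdef
      obtain ⟨c', hc'C, hc's⟩ := hD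
      have hDne : D.Nonempty := ⟨c', by simp [hDdef, hc'C, hc's]⟩
      set c₀ := D.max' hDne with hc₀def
      have hmemD : ∀ a : ↥S, a ∈ D ↔ a ∈ C ∧ a < s := by
        intro a
        rw [hDdef, Finset.mem_filter]
        simp
      have hc₀ : c₀ ∈ C ∧ c₀ < s := (hmemD c₀).mp (D.max'_mem hDne)
      set T : Finset ↥S := Finset.univ.filter (fun u => c₀ < u) with hTdef
      have hmemT : ∀ a : ↥S, a ∈ T ↔ c₀ < a := by
        intro a
        rw [hTdef, Finset.mem_filter]
        simp
      have hsT : s ∈ T := (hmemT s).mpr hc₀.2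
      have hTne : T.Nonempty := ⟨s, hsT⟩
      set t := T.min' hTne with htdef
      have hc₀t : c₀ < t := (hmemT t).mp (T.min'_mem hTne)
      have hts : t ≤ s := T.min'_le s hsT
      have hmin : ∀ u : ↥S, c₀ < u → t ≤ u := fun u hu => T.min'_le u ((hmemT u).mpr hu)
      have hmaxD : ∀ c ∈ C, c < s → c ≤ c₀ := fun c hc hcs =>
        D.le_max' c ((hmemD c).mpr ⟨hc, hcs⟩)
      have htC : t ∉ C := by
        intro htc
        have hts' : t < s := lt_of_le_of_ne hts (fun h => hsC (h ▸ htc))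
        exact absurd (hmaxD t htc hts') (not_le.mpr hc₀t)
      refine ⟨t, Or.inr ⟨c₀, hc₀.1, hc₀t, hmin⟩, hts, ?_, ?_⟩
      · intro c hc
        constructor
        · intro htc
          by_contra hsc
          push_neg at hsc
          exact absurd htc (not_le.mpr (lt_of_le_of_lt (hmaxD c hc hsc) hc₀t))
        · exact fun h => hts.trans h
      · intro c hc
        exact ⟨fun h => absurd (h ▸ hc) htC, fun h => absurd (h ▸ hc) hsC⟩
    · push_neg at hD
      have hD' : ∀ c ∈ C, s ≤ c := hD
      have hmins : sMinElt S hS ≤ s := S.min'_le (s : ℝ) s.2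
      have hminC : sMinElt S hS ∉ C := by
        intro h
        exact hsa (le_antisymm (hD' _ h) hmins ▸ (Or.inl (Or.inr rfl)))
      refine ⟨sMinElt S hS, Or.inl (Or.inr rfl), hmins, ?_, ?_⟩
      · intro c hc
        exact ⟨fun _ => hD' c hc, fun h => hmins.trans h⟩
      · intro c hc
        exact ⟨fun h => absurd (h ▸ hc) hminC, fun h => absurd (h ▸ hc) hsC⟩

/-- Infimum of a continuous function over the closure of a set equals the
infimum over the set itself. -/
lemma sInf_image_closure {X : Type*} [TopologicalSpace X] (f : X → ℝ) (hf : Continuous f)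
    (T : Set X) (hTne : T.Nonempty) (hbdd : BddBelow (f '' T)) :
    sInf (f '' closure T) = sInf (f '' T) := by
  have h1 : f '' closure T ⊆ closure (f '' T) := image_closure_subset_closure_image hf
  have h2 : closure (f '' T) ⊆ Set.Ici (sInf (f '' T)) :=
    closure_minimal (fun y hy => csInf_le hbdd hy) isClosed_Ici
  have hbdd2 : BddBelow (f '' closure T) := ⟨sInf (f '' T), fun y hy => h2 (h1 hy)⟩
  apply le_antisymm
  · exact csInf_le_csInf hbdd2 (hTne.image f) (Set.image_mono subset_closure)
  · exact le_csInf ((hTne.mono subset_closure).image f) (fun b hb => h2 (h1 hb))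

/-- Means of distributions are bounded below by `S.min'`. -/
lemma distMean_lb (S : Finset ℝ) (hS : S.Nonempty) {F : EuclideanSpace ℝ ↥S}
    (hF : F ∈ distSet S) : S.min' hS ≤ distMean S F := by
  have h1 : ∑ s : ↥S, F s * S.min' hS = S.min' hS := by
    rw [← Finset.sum_mul, hF.2, one_mul]
  calc S.min' hS = ∑ s : ↥S, F s * S.min' hS := h1.symm
    _ ≤ ∑ s : ↥S, F s * (s : ℝ) :=
        Finset.sum_le_sum (fun s _ =>
          mul_le_mul_of_nonneg_left (S.min'_le (s : ℝ) s.2) (hF.1 s))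
    _ = distMean S F := rfl

/-- if all distributions agreeing pointwise and cumulatively on
`C ⊆ S` assign the same probability to the upper set `Ω(x, R)`, then the
pessimal bound is attained over the refinement supported on `C⁺`:
`B_R^*(x) = inf {E[F] : F ∈ 𝒻_{C⁺}(Ω(x,R), α)}`. -/
theorem stmt16 (S : Finset ℝ) (hS : S.Nonempty) (n : ℕ) (hn : 1 ≤ n)
    (α : ℝ) (hα0 : 0 ≤ α) (hα1 : α < 1)
    (r : (Fin n → ↥S) → (Fin n → ↥S) → Prop)
    (hrefl : ∀ x ∈ sortedTuples S n, r x x)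
    (htrans : ∀ x ∈ sortedTuples S n, ∀ y ∈ sortedTuples S n, ∀ z ∈ sortedTuples S n,
      r x y → r y z → r x z)
    (htotal : ∀ x ∈ sortedTuples S n, ∀ y ∈ sortedTuples S n, r x y ∨ r y x)
    (x : Fin n → ↥S) (hx : x ∈ sortedTuples S n)
    (hne : (intLikelySorted S n (upperSet S n r x) α).Nonempty)
    (C : Set ↥S)
    (hC : ∀ G ∈ distSet S, ∀ H ∈ distSet S, ptAgree C G H → cumAgree S C G H →
      probSorted S n G (upperSet S n r x) = probSorted S n H (upperSet S n r x)) :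
    pessimal S n r α x =
      sInf (distMean S '' likelySortedC S n (aug S hS C) (upperSet S n r x) α) := by
  classical
  set A := upperSet S n r x with hA
  choose π hπaug hπle hπle_iff hπeq_iff using exists_tgt S hS C
  set Caug := aug S hS C with hCaug
  set Φ : EuclideanSpace ℝ ↥S → EuclideanSpace ℝ ↥S :=
    fun F => WithLp.toLp 2 (fun t => ∑ u : ↥S, if π u = t then F u else 0) with hΦ
  have hΦdist : ∀ F ∈ distSet S, Φ F ∈ distSet S := by
    intro F hF
    constructor
    · intro t
      exact Finset.sum_nonneg fun u _ => by by_cases h : π u = t <;> simp [h, hF.1 u]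
    · calc ∑ t : ↥S, Φ F t = ∑ t : ↥S, ∑ u : ↥S, if π u = t then F u else 0 := rfl
        _ = ∑ u : ↥S, ∑ t : ↥S, if π u = t then F u else 0 := Finset.sum_comm
        _ = ∑ u : ↥S, F u := by simp [Finset.sum_ite_eq]
        _ = 1 := hF.2
  have hΦsupp : ∀ F, ∀ t, t ∉ Caug → Φ F t = 0 := by
    intro F t ht
    apply Finset.sum_eq_zero
    intro u _
    rw [if_neg]
    exact fun h => ht (h ▸ hπaug u)
  have hΦpt : ∀ F, ptAgree C F (Φ F) := by
    intro F c hc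
    show F c = Φ F c
    have h1 : Φ F c = ∑ u : ↥S, if u = c then F u else 0 := by
      apply Finset.sum_congr rfl
      intro u _
      by_cases h : u = c
      · rw [if_pos h, if_pos ((hπeq_iff u c hc).mpr h)]
      · rw [if_neg h, if_neg (fun h' => h ((hπeq_iff u c hc).mp h'))]
    rw [h1, Finset.sum_ite_eq' Finset.univ c F, if_pos (Finset.mem_univ c)]
  have hΦcum : ∀ F, cumAgree S C F (Φ F) := by
    intro F c hc
    show (∑ s : ↥S, if s ≤ c then F s else 0) = ∑ s : ↥S, if s ≤ c then Φ F s else 0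
    have step1 : (∑ t : ↥S, if t ≤ c then Φ F t else 0)
        = ∑ u : ↥S, ∑ t : ↥S, if π u = t then (if t ≤ c then F u else 0) else 0 := by
      rw [← Finset.sum_comm]
      apply Finset.sum_congr rfl
      intro t _
      by_cases h : t ≤ c
      · rw [if_pos h]
        apply Finset.sum_congr rfl
        intro u _
        by_cases h' : π u = t <;> simp [h', h]
      · simp only [if_neg h]
        exact (Finset.sum_eq_zero fun u _ => by by_cases h' : π u = t <;> simp [h', h]).symm
    rw [step1]
    have step2 : ∀ u : ↥S, (∑ t : ↥S, if π u = t then (if t ≤ c then F u else 0) else 0)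
        = if u ≤ c then F u else 0 := by
      intro u
      rw [Finset.sum_ite_eq Finset.univ (π u) (fun t => if t ≤ c then F u else 0),
        if_pos (Finset.mem_univ _)]
      by_cases h : u ≤ c
      · rw [if_pos ((hπle_iff u c hc).mpr h), if_pos h]
      · rw [if_neg (fun h' => h ((hπle_iff u c hc).mp h')), if_neg h]
    rw [Finset.sum_congr rfl fun u _ => step2 u]
  have hΦmean : ∀ F ∈ distSet S, distMean S (Φ F) ≤ distMean S F := by
    intro F hF
    have h1 : distMean S (Φ F) = ∑ u : ↥S, F u * (π u : ℝ) := by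
      show (∑ t : ↥S, (∑ u : ↥S, if π u = t then F u else 0) * (t : ℝ)) = _
      have h2 : ∀ t : ↥S, (∑ u : ↥S, if π u = t then F u else 0) * (t : ℝ)
          = ∑ u : ↥S, if π u = t then F u * (t : ℝ) else 0 := by
        intro t
        rw [Finset.sum_mul]
        exact Finset.sum_congr rfl fun u _ => by by_cases h : π u = t <;> simp [h]
      rw [Finset.sum_congr rfl fun t _ => h2 t, Finset.sum_comm]
      apply Finset.sum_congr rfl
      intro u _
      rw [Finset.sum_ite_eq Finset.univ (π u) (fun t : ↥S => F u * (t : ℝ)),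
        if_pos (Finset.mem_univ _)]
    rw [h1]
    exact Finset.sum_le_sum fun u _ =>
      mul_le_mul_of_nonneg_left (Subtype.coe_le_coe.mpr (hπle u)) (hF.1 u)
  have hΦmem : ∀ F ∈ intLikelySorted S n A α, Φ F ∈ intLikelySortedC S n Caug A α := by
    rintro F ⟨hFd, hFα⟩
    refine ⟨⟨hΦdist F hFd, hΦsupp F⟩, hΦdist F hFd, ?_⟩
    have h := hC F hFd (Φ F) (hΦdist F hFd) (hΦpt F) (hΦcum F)
    exact h ▸ hFα
  have hGne : (intLikelySortedC S n Caug A α).Nonempty :=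
    ⟨Φ hne.choose, hΦmem hne.choose hne.choose_spec⟩
  have hsub1 : intLikelySorted S n A α ⊆ distSet S := fun F hF => hF.1
  have hsub2 : intLikelySortedC S n Caug A α ⊆ distSet S := fun F hF => hF.1.1
  have hbdd1 : BddBelow (distMean S '' intLikelySorted S n A α) := by
    refine ⟨S.min' hS, ?_⟩
    rintro b ⟨F, hF, rfl⟩
    exact distMean_lb S hS (hsub1 hF)
  have hbdd2 : BddBelow (distMean S '' intLikelySortedC S n Caug A α) := by
    refine ⟨S.min' hS, ?_⟩
    rintro b ⟨F, hF, rfl⟩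
    exact distMean_lb S hS (hsub2 hF)
  have hcont : Continuous (distMean S) := by unfold distMean; fun_prop
  show sInf (distMean S '' likelySorted S n A α)
      = sInf (distMean S '' likelySortedC S n Caug A α)
  rw [likelySorted, likelySortedC, sInf_image_closure _ hcont _ hne hbdd1,
    sInf_image_closure _ hcont _ hGne hbdd2]
  apply le_antisymm
  · exact csInf_le_csInf hbdd1 (hGne.image _) (Set.image_mono fun F hF => hF.2)
  · refine le_csInf (hne.image _) ?_
    rintro b ⟨F, hF, rfl⟩
    exact le_trans (csInf_le hbdd2 ⟨Φ F, hΦmem F hF, rfl⟩) (hΦmean F hF.1)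

end
end

section
/- Fix x ∈ Ω, i ∈ {1,…,n}, and α ∈ [0,1) with 𝒢(Ω(x,R_i), α) nonempty, where R_i is the i-th quantile preorder. Let C = {x_(i)}, where x_(i) is the i-th smallest entry of x. Then B_{R_i}^*(x) = inf{E[F] : F ∈ 𝒻_{C^+}(Ω(x,R_i), α)}. -/
noncomputable section

/-- The `i`-th quantile preorder `R_i` on sorted tuples: `x ≲ y` iff
`x_(i) ≤ y_(i)` (for sorted tuples the `i`-th order statistic is entry `i`). -/
def quantileRel {S : Finset ℝ} {n : ℕ} (i : Fin n) (x y : Fin n → ↥S) : Prop :=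
  x i ≤ y i

section AuxLemmas

open Classical in
/-- Pushing a distribution forward along `τ` turns the probability of `B` into the
probability of the preimage of `B` under coordinatewise application of `τ`. -/
lemma probOf_push (S : Finset ℝ) (n : ℕ) (τ : ↥S → ↥S) (F : EuclideanSpace ℝ ↥S)
    (B : Set (Fin n → ↥S)) :
    probOf S n (WithLp.toLp 2 (fun s => ∑ t : ↥S, if τ t = s then F t else 0)) B
      = ∑ z : Fin n → ↥S, if τ ∘ z ∈ B then ∏ j, F (z j) else 0 := by
  classical
  unfold probOf
  simp only [PiLp.toLp_apply]
  have h1 : ∀ y : Fin n → ↥S,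
      (if y ∈ B then ∏ j, (∑ t : ↥S, if τ t = y j then F t else 0) else 0)
        = ∑ z : Fin n → ↥S, if y ∈ B ∧ τ ∘ z = y then ∏ j, F (z j) else 0 := by
    intro y
    by_cases hy : y ∈ B
    · rw [if_pos hy, Fintype.prod_sum]
      refine Finset.sum_congr rfl fun z _ => ?_
      by_cases hz : τ ∘ z = y
      · rw [if_pos ⟨hy, hz⟩]
        refine Finset.prod_congr rfl fun j _ => ?_
        exact if_pos (congrFun hz j)
      · rw [if_neg (by simp [hz])]
        obtain ⟨j, hj⟩ := Function.ne_iff.mp hz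
        exact Finset.prod_eq_zero (Finset.mem_univ j) (if_neg hj)
    · simp [hy]
  rw [Finset.sum_congr rfl fun y _ => h1 y, Finset.sum_comm]
  refine Finset.sum_congr rfl fun z _ => ?_
  rw [Finset.sum_eq_single (τ ∘ z)]
  · by_cases h : τ ∘ z ∈ B <;> simp [h]
  · intro y _ hy
    exact if_neg (fun h => hy h.2.symm)
  · simp

/-- Sorting commutes with postcomposition by a monotone map. -/
lemma sortTup_comp {S : Finset ℝ} {n : ℕ} {τ : ↥S → ↥S} (hτ : Monotone τ)
    (y : Fin n → ↥S) : sortTup S n (τ ∘ y) = τ ∘ sortTup S n y := by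
  have hmono : Monotone ((τ ∘ y) ∘ Tuple.sort y) := by
    intro a b hab
    exact hτ (Tuple.monotone_sort y hab)
  have h := (Tuple.comp_sort_eq_comp_iff_monotone (f := τ ∘ y)
    (σ := Tuple.sort y)).mpr hmono
  unfold sortTup
  rw [← h]
  rfl

lemma distMean_ge_min {S : Finset ℝ} (hS : S.Nonempty) {F : EuclideanSpace ℝ ↥S}
    (hF : F ∈ distSet S) : S.min' hS ≤ distMean S F := by
  obtain ⟨h0, h1⟩ := hF
  calc S.min' hS = ∑ s : ↥S, F s * S.min' hS := by
        rw [← Finset.sum_mul, h1, one_mul]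
    _ ≤ ∑ s : ↥S, F s * (s : ℝ) :=
        Finset.sum_le_sum fun s _ => mul_le_mul_of_nonneg_left (S.min'_le _ s.2) (h0 s)

lemma continuous_distMean (S : Finset ℝ) : Continuous (distMean S) := by
  unfold distMean
  exact continuous_finset_sum _ fun s _ =>
    ((EuclideanSpace.proj s : EuclideanSpace ℝ ↥S →L[ℝ] ℝ).continuous).mul continuous_const

lemma isClosed_distSet (S : Finset ℝ) : IsClosed (distSet S) := by
  have h1 : IsClosed {F : EuclideanSpace ℝ ↥S | ∀ s, 0 ≤ F s} := by
    have : {F : EuclideanSpace ℝ ↥S | ∀ s, 0 ≤ F s} = ⋂ s : ↥S, {F | 0 ≤ F s} := by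
      ext F; simp [Set.mem_iInter]
    rw [this]
    exact isClosed_iInter fun s => isClosed_le continuous_const
      (EuclideanSpace.proj s : EuclideanSpace ℝ ↥S →L[ℝ] ℝ).continuous
  have h2 : IsClosed {F : EuclideanSpace ℝ ↥S | ∑ s, F s = 1} :=
    isClosed_eq (continuous_finset_sum _ fun s _ =>
      (EuclideanSpace.proj s : EuclideanSpace ℝ ↥S →L[ℝ] ℝ).continuous) continuous_const
  exact h1.inter h2

lemma csInf_image_closure_eq {X : Type*} [TopologicalSpace X] {f : X → ℝ}
    (hf : Continuous f) {U : Set X} (hU : U.Nonempty)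
    (hbd : BddBelow (f '' closure U)) :
    sInf (f '' closure U) = sInf (f '' U) := by
  have hsub : f '' U ⊆ f '' closure U := Set.image_mono subset_closure
  have hbd' : BddBelow (f '' U) := hbd.mono hsub
  refine le_antisymm (csInf_le_csInf hbd (hU.image f) hsub) ?_
  refine le_csInf ((hU.mono subset_closure).image f) fun b hb => ?_
  have hb' : b ∈ closure (f '' U) := image_closure_subset_closure_image hf hb
  have hlb : sInf (f '' U) ∈ lowerBounds (closure (f '' U)) := by
    rw [lowerBounds_closure]
    exact fun a ha => csInf_le hbd' ha
  exact hlb hb'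

end AuxLemmas

/-- for the `i`-th quantile preorder `R_i` and `C = {x_(i)}`,
`B_{R_i}^*(x) = inf {E[F] : F ∈ 𝒻_{C⁺}(Ω(x, R_i), α)}`. -/
theorem stmt17 (S : Finset ℝ) (hS : S.Nonempty) (n : ℕ) (hn : 1 ≤ n)
    (α : ℝ) (hα0 : 0 ≤ α) (hα1 : α < 1)
    (i : Fin n) (x : Fin n → ↥S) (hx : x ∈ sortedTuples S n)
    (hne : (intLikelySorted S n (upperSet S n (quantileRel i) x) α).Nonempty) :
    pessimal S n (quantileRel i) α x =
      sInf (distMean S ''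
        likelySortedC S n (aug S hS {x i}) (upperSet S n (quantileRel i) x) α) := by
  classical
  set A := upperSet S n (quantileRel i) x with hA
  set C : Set ↥S := aug S hS {x i} with hC
  set U1 := intLikelySorted S n A α with hU1
  set U2 := intLikelySortedC S n C A α with hU2
  set c : ↥S := x i with hc
  set m : ↥S := sMinElt S hS with hm
  have hmle : ∀ s : ↥S, m ≤ s := fun s => S.min'_le _ s.2
  set τ : ↥S → ↥S := fun s => if s < c then m else c with hτ
  have hτle : ∀ s, τ s ≤ s := by
    intro s
    by_cases h : s < c
    · simpa [hτ, h] using hmle s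
    · simpa [hτ, h] using le_of_not_gt h
  have hτmono : Monotone τ := by
    intro s t hst
    by_cases ht : t < c
    · have hs : s < c := lt_of_le_of_lt hst ht
      simp [hτ, hs, ht]
    · by_cases hs : s < c
      · simpa [hτ, hs, ht] using hmle c
      · simp [hτ, hs, ht]
  have hτge : ∀ s, c ≤ s → c ≤ τ s := by
    intro s hs
    have : ¬ s < c := not_lt.mpr hs
    simp [hτ, this]
  have hτmem : ∀ t, τ t ∈ C := by
    intro t
    by_cases h : t < c
    · have : τ t = m := by simp [hτ, h]
      rw [this, hC]
      exact Or.inl (Or.inr rfl)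
    · have : τ t = c := by simp [hτ, h]
      rw [this, hC]
      exact Or.inl (Or.inl rfl)
  -- The key construction: pushing forward along τ
  have key : ∀ F ∈ U1, ∃ G ∈ U2, distMean S G ≤ distMean S F := by
    intro F hF
    obtain ⟨⟨hF0, hF1⟩, hFα⟩ := hF
    set G : EuclideanSpace ℝ ↥S := WithLp.toLp 2 (fun s => ∑ t : ↥S, if τ t = s then F t else 0) with hG
    have hG0 : ∀ s, 0 ≤ G s := by
      intro s
      refine Finset.sum_nonneg fun t _ => ?_
      split
      · exact hF0 t
      · exact le_rfl
    have hG1 : ∑ s, G s = 1 := by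
      rw [hG]
      show (∑ s : ↥S, ∑ t : ↥S, if τ t = s then F t else 0) = 1
      rw [Finset.sum_comm]
      calc (∑ t : ↥S, ∑ s : ↥S, if τ t = s then F t else 0)
          = ∑ t : ↥S, F t := by
            refine Finset.sum_congr rfl fun t _ => ?_
            rw [Finset.sum_ite_eq Finset.univ (τ t) (fun _ => F t)]
            simp
        _ = 1 := hF1
    have hGsupp : ∀ s, s ∉ C → G s = 0 := by
      intro s hs
      refine Finset.sum_eq_zero fun t _ => ?_
      exact if_neg fun h => hs (by rw [← h]; exact hτmem t)
    -- Membership in the event is preserved by τ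
    have hBτ : ∀ z : Fin n → ↥S, sortTup S n z ∈ A → sortTup S n (τ ∘ z) ∈ A := by
      intro z hz
      obtain ⟨hzmono, hzle⟩ := hz
      rw [sortTup_comp hτmono z]
      constructor
      · exact fun a b hab => hτmono (Tuple.monotone_sort z hab)
      · exact hτge _ hzle
    have hprob : probSorted S n F A ≤ probSorted S n G A := by
      unfold probSorted
      rw [hG, probOf_push S n τ F]
      unfold probOf
      refine Finset.sum_le_sum fun z _ => ?_
      by_cases h : z ∈ {y | sortTup S n y ∈ A}
      · rw [if_pos h, if_pos (show τ ∘ z ∈ {y | sortTup S n y ∈ A} from hBτ z h)]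
      · rw [if_neg h]
        split
        · exact Finset.prod_nonneg fun j _ => hF0 _
        · exact le_rfl
    have hmean : distMean S G ≤ distMean S F := by
      unfold distMean
      have : (∑ s : ↥S, G s * (s : ℝ)) = ∑ t : ↥S, F t * ((τ t : ℝ)) := by
        rw [hG]
        show (∑ s : ↥S, (∑ t : ↥S, if τ t = s then F t else 0) * (s : ℝ)) = _
        calc (∑ s : ↥S, (∑ t : ↥S, if τ t = s then F t else 0) * (s : ℝ))
            = ∑ s : ↥S, ∑ t : ↥S, (if τ t = s then F t * (s : ℝ) else 0) := by
              refine Finset.sum_congr rfl fun s _ => ?_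
              rw [Finset.sum_mul]
              refine Finset.sum_congr rfl fun t _ => ?_
              split <;> simp
          _ = ∑ t : ↥S, ∑ s : ↥S, (if τ t = s then F t * (s : ℝ) else 0) :=
              Finset.sum_comm
          _ = ∑ t : ↥S, F t * ((τ t : ℝ)) := by
              refine Finset.sum_congr rfl fun t _ => ?_
              rw [Finset.sum_ite_eq Finset.univ (τ t) (fun s => F t * (s : ℝ))]
              simp
      rw [this]
      exact Finset.sum_le_sum fun t _ => mul_le_mul_of_nonneg_left (hτle t) (hF0 t)
    exact ⟨G, ⟨⟨⟨hG0, hG1⟩, hGsupp⟩, ⟨hG0, hG1⟩, lt_of_lt_of_le hFα hprob⟩, hmean⟩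
  -- Infimum bookkeeping
  have hU2sub : U2 ⊆ U1 := Set.inter_subset_right
  have hU1dist : U1 ⊆ distSet S := fun F hF => hF.1
  have hU2ne : U2.Nonempty := by
    obtain ⟨F, hF⟩ := hne
    obtain ⟨G, hG, _⟩ := key F hF
    exact ⟨G, hG⟩
  have hbd : ∀ V : Set (EuclideanSpace ℝ ↥S), V ⊆ distSet S →
      BddBelow (distMean S '' V) := by
    intro V hV
    refine ⟨S.min' hS, ?_⟩
    rintro b ⟨F, hF, rfl⟩
    exact distMean_ge_min hS (hV hF)
  have hclU1 : closure U1 ⊆ distSet S :=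
    closure_minimal hU1dist (isClosed_distSet S)
  have hclU2 : closure U2 ⊆ distSet S :=
    closure_minimal (fun F hF => hU1dist (hU2sub hF)) (isClosed_distSet S)
  have e1 : sInf (distMean S '' closure U1) = sInf (distMean S '' U1) :=
    csInf_image_closure_eq (continuous_distMean S) hne (hbd _ hclU1)
  have e2 : sInf (distMean S '' closure U2) = sInf (distMean S '' U2) :=
    csInf_image_closure_eq (continuous_distMean S) hU2ne (hbd _ hclU2)
  have main : sInf (distMean S '' U1) = sInf (distMean S '' U2) := by
    refine le_antisymm ?_ ?_
    · exact csInf_le_csInf (hbd _ hU1dist) (hU2ne.image _)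
        (Set.image_mono hU2sub)
    · refine le_csInf (hne.image _) ?_
      rintro b ⟨F, hF, rfl⟩
      obtain ⟨G, hG, hGle⟩ := key F hF
      exact le_trans (csInf_le (hbd _ fun H hH => hU1dist (hU2sub hH)) ⟨G, hG, rfl⟩) hGle
  show sInf (distMean S '' closure U1) = sInf (distMean S '' closure U2)
  rw [e1, e2, main]


end
end
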